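/- For every ε > 0 there exists ε' > 0 such that for every prime p and every nonempty finite subset H of F_p, if max_{a ∈ ℤ, p ∤ a} |∑_{h∈H} e_p(a h)| < ε'·|H|, then H is ε-equidistributed modulo p, i.e. for every interval J of F_p one has | |H ∩ J|/|H| − |J|/p | < ε. -/

import Mathlib

open Finset

/-- `e_p(x) = exp(2πi x / p)` for `x ∈ F_p`. -/
noncomputable def ep (p : ℕ) (x : ZMod p) : ℂ :=
  Complex.exp (2 * Real.pi * Complex.I * (x.val : ℂ) / (p : ℂ))

/-- An interval in `F_p`: a set of the form `{a x + b : 0 ≤ x ≤ |J| - 1}` with `a ≠ 0`. -/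
def IsInterval (p : ℕ) (J : Finset (ZMod p)) : Prop :=
  ∃ a b : ZMod p, a ≠ 0 ∧
    J = (Finset.range J.card).image (fun n : ℕ => a * (n : ZMod p) + b)

namespace WeylAux


noncomputable def zt (p : ℕ) : ℂ := Complex.exp (2 * Real.pi * Complex.I / p)

lemma zt_pow_p (p : ℕ) (hp : p ≠ 0) : zt p ^ p = 1 := by
  rw [zt, ← Complex.exp_nat_mul]
  have hpc : (p:ℂ) ≠ 0 := Nat.cast_ne_zero.mpr hp
  rw [show (p:ℂ) * (2 * Real.pi * Complex.I / p) = 2 * Real.pi * Complex.I by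
    field_simp]
  exact Complex.exp_two_pi_mul_I

lemma zt_pow_mod (p : ℕ) (hp : p ≠ 0) (n : ℕ) : zt p ^ n = zt p ^ (n % p) := by
  conv_lhs => rw [← Nat.mod_add_div n p, pow_add, pow_mul, zt_pow_p p hp, one_pow, mul_one]

lemma ep_eq_pow (p : ℕ) (x : ZMod p) : ep p x = zt p ^ x.val := by
  rw [ep, zt, ← Complex.exp_nat_mul]
  congr 1
  ring

lemma ep_add (p : ℕ) [NeZero p] (x y : ZMod p) : ep p (x + y) = ep p x * ep p y := by
  have hp : p ≠ 0 := NeZero.ne p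
  rw [ep_eq_pow, ep_eq_pow, ep_eq_pow, ← pow_add, ZMod.val_add, ← zt_pow_mod p hp]

lemma ep_zero (p : ℕ) : ep p 0 = 1 := by
  simp [ep]

lemma norm_ep (p : ℕ) (x : ZMod p) : ‖ep p x‖ = 1 := by
  rw [ep, show (2 * Real.pi * Complex.I * (x.val : ℂ) / (p : ℂ))
      = ((2 * Real.pi * x.val / p : ℝ) : ℂ) * Complex.I by push_cast; ring,
    Complex.norm_exp_ofReal_mul_I]

lemma ep_ne_zero (p : ℕ) (x : ZMod p) : ep p x ≠ 0 := by
  intro h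
  have := norm_ep p x
  rw [h] at this
  simp at this

lemma ep_conj (p : ℕ) [NeZero p] (x : ZMod p) :
    (starRingEnd ℂ) (ep p x) = ep p (-x) := by
  have h1 : ep p (-x) * ep p x = 1 := by
    rw [← ep_add]; simp [ep_zero]
  have h2 : (starRingEnd ℂ) (ep p x) * ep p x = 1 := by
    rw [mul_comm, Complex.mul_conj']
    rw [norm_ep]
    norm_num
  exact mul_right_cancel₀ (ep_ne_zero p x) (h2.trans h1.symm)

lemma natCast_val_eq (p : ℕ) [NeZero p] (x : ZMod p) : ((x.val : ℕ) : ZMod p) = x := by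
  simp [ZMod.natCast_val, ZMod.cast_id]

lemma sum_univ_zmod (p : ℕ) [NeZero p] (f : ℕ → ℂ) :
    ∑ a : ZMod p, f a.val = ∑ n ∈ range p, f n := by
  refine Finset.sum_nbij' (fun a => a.val) (fun n => (n : ZMod p)) ?_ ?_ ?_ ?_ ?_
  · intro a _; exact mem_range.mpr (ZMod.val_lt a)
  · intro n _; exact mem_univ _
  · intro a _; exact natCast_val_eq p a
  · intro n hn; exact ZMod.val_natCast_of_lt (mem_range.mp hn)
  · intro a _; rfl

lemma sum_ep_delta (p : ℕ) [hp : Fact p.Prime] (z : ZMod p) :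
    ∑ a : ZMod p, ep p (a * z) = if z = 0 then (p : ℂ) else 0 := by
  by_cases hz : z = 0
  · simp [hz, ep_zero, ZMod.card]
  · rw [if_neg hz]
    have hb : Function.Bijective (fun a : ZMod p => a * z) :=
      (Equiv.mulRight₀ z hz).bijective
    rw [Fintype.sum_bijective _ hb _ (fun b => ep p b) (fun a => rfl)]
    have : ∑ b : ZMod p, ep p b = ∑ n ∈ range p, zt p ^ n := by
      rw [← sum_univ_zmod p (fun n => zt p ^ n)]
      exact Finset.sum_congr rfl (fun a _ => ep_eq_pow p a)
    rw [this]
    have hprim := Complex.isPrimitiveRoot_exp p hp.out.ne_zero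
    exact hprim.geom_sum_eq_zero hp.out.one_lt


variable (p : ℕ) [hp : Fact p.Prime]

lemma key_identity (H : Finset (ZMod p)) (t : ℕ) (A : Finset (ZMod p)) :
    (p : ℂ) * ∑ h ∈ H, ∑ u ∈ range t, ∑ v ∈ range t,
        (if h + (u : ZMod p) - (v : ZMod p) ∈ A then (1:ℂ) else 0)
    = ∑ a : ZMod p, (∑ h ∈ H, ep p (a * h)) * (∑ u ∈ range t, ep p (a * u))
        * (∑ v ∈ range t, ep p (-(a * v))) * (∑ x ∈ A, ep p (-(a * x))) := by
  have expand : ∀ a : ZMod p,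
      (∑ h ∈ H, ep p (a * h)) * (∑ u ∈ range t, ep p (a * u))
        * (∑ v ∈ range t, ep p (-(a * v))) * (∑ x ∈ A, ep p (-(a * x)))
      = ∑ x ∈ A, ∑ v ∈ range t, ∑ u ∈ range t, ∑ h ∈ H,
          ep p (a * (h + (u : ZMod p) - (v : ZMod p) - x)) := by
    intro a
    simp only [Finset.sum_mul, Finset.mul_sum]
    refine Finset.sum_congr rfl fun x _ => ?_
    refine Finset.sum_congr rfl fun v _ => ?_
    refine Finset.sum_congr rfl fun u _ => ?_
    refine Finset.sum_congr rfl fun h _ => ?_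
    rw [show a * (h + (u : ZMod p) - (v : ZMod p) - x)
        = a * h + (a * u + (-(a * v) + -(a * x))) by ring,
      ep_add, ep_add, ep_add]
    ring
  rw [Finset.sum_congr rfl fun a _ => expand a]
  -- move the a-sum innermost
  conv_rhs => rw [Finset.sum_comm]
  conv_rhs => enter [2, x]; rw [Finset.sum_comm]
  conv_rhs => enter [2, x]; enter [2, v]; rw [Finset.sum_comm]
  conv_rhs => enter [2, x]; enter [2, v]; enter [2, u]; rw [Finset.sum_comm]
  -- evaluate the delta sum
  conv_rhs => enter [2, x]; enter [2, v]; enter [2, u]; enter [2, h]; rw [sum_ep_delta]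
  simp only [sub_eq_zero]
  -- move the x-sum innermost
  conv_rhs => rw [Finset.sum_comm]
  conv_rhs => enter [2, v]; rw [Finset.sum_comm]
  conv_rhs => enter [2, v]; enter [2, u]; rw [Finset.sum_comm]
  conv_rhs => enter [2, v]; enter [2, u]; enter [2, h]; rw [Finset.sum_ite_eq]
  -- expand the left-hand side
  rw [Finset.mul_sum]
  conv_lhs => enter [2, h]; rw [Finset.mul_sum]
  conv_lhs => enter [2, h]; enter [2, u]; rw [Finset.mul_sum]
  simp only [mul_ite, mul_one, mul_zero]
  -- reorder
  conv_lhs => rw [Finset.sum_comm]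
  conv_lhs => enter [2, u]; rw [Finset.sum_comm]
  conv_lhs => rw [Finset.sum_comm]

lemma parsevalD (t : ℕ) (ht : t ≤ p) :
    ∑ a : ZMod p, (∑ u ∈ range t, ep p (a * u)) * (∑ v ∈ range t, ep p (-(a * v)))
      = (p : ℂ) * t := by
  have expand : ∀ a : ZMod p,
      (∑ u ∈ range t, ep p (a * u)) * (∑ v ∈ range t, ep p (-(a * v)))
      = ∑ v ∈ range t, ∑ u ∈ range t, ep p (a * ((u : ZMod p) - v)) := by
    intro a
    simp only [Finset.sum_mul, Finset.mul_sum]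
    refine Finset.sum_congr rfl fun v _ => ?_
    refine Finset.sum_congr rfl fun u _ => ?_
    rw [show a * ((u : ZMod p) - v) = a * u + -(a * v) by ring, ep_add]
  rw [Finset.sum_congr rfl fun a _ => expand a]
  conv_lhs => rw [Finset.sum_comm]
  conv_lhs => enter [2, v]; rw [Finset.sum_comm]
  conv_lhs => enter [2, v]; enter [2, u]; rw [sum_ep_delta]
  simp only [sub_eq_zero]
  have hinj : ∀ u ∈ range t, ∀ v ∈ range t, ((u : ZMod p) = (v : ZMod p)) ↔ u = v := by
    intro u hu v hv
    constructor
    · intro hc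
      have := congrArg ZMod.val hc
      rwa [ZMod.val_natCast_of_lt (lt_of_lt_of_le (mem_range.mp hu) ht),
        ZMod.val_natCast_of_lt (lt_of_lt_of_le (mem_range.mp hv) ht)] at this
    · intro h; rw [h]
  have step : ∀ v ∈ range t,
      ∑ u ∈ range t, (if (u : ZMod p) = (v : ZMod p) then (p:ℂ) else 0) = (p : ℂ) := by
    intro v hv
    rw [Finset.sum_congr rfl fun u hu => if_congr (hinj u hu v hv) rfl rfl,
      Finset.sum_ite_eq' (range t) v fun _ => (p:ℂ), if_pos hv]
  rw [Finset.sum_congr rfl step, Finset.sum_const, card_range, nsmul_eq_mul, mul_comm]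


variable (p : ℕ) [hp : Fact p.Prime]

lemma conj_D (t : ℕ) (a : ZMod p) :
    (∑ v ∈ range t, ep p (-(a * v))) = (starRingEnd ℂ) (∑ u ∈ range t, ep p (a * u)) := by
  rw [map_sum]
  exact Finset.sum_congr rfl fun u _ => (ep_conj p (a * u)).symm

lemma parsevalD_norm (t : ℕ) (ht : t ≤ p) :
    ∑ a : ZMod p, ‖∑ u ∈ range t, ep p (a * u)‖ ^ 2 = (p : ℝ) * t := by
  have h := parsevalD p t ht
  have h2 : ∀ a : ZMod p,
      (∑ u ∈ range t, ep p (a * u)) * (∑ v ∈ range t, ep p (-(a * v)))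
      = ((‖∑ u ∈ range t, ep p (a * u)‖ : ℝ) : ℂ) ^ 2 := by
    intro a
    rw [conj_D p t a, Complex.mul_conj']
  rw [Finset.sum_congr rfl fun a _ => h2 a] at h
  have : ((∑ a : ZMod p, ‖∑ u ∈ range t, ep p (a * u)‖ ^ 2 : ℝ) : ℂ)
      = (((p : ℝ) * t : ℝ) : ℂ) := by
    push_cast
    push_cast at h
    exact h
  exact_mod_cast this

lemma count_bound (H : Finset (ZMod p)) (ε' : ℝ)
    (hF : ∀ a : ZMod p, a ≠ 0 → ‖∑ h ∈ H, ep p (a * h)‖ ≤ ε' * H.card)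
    (hε'H : 0 ≤ ε' * H.card)
    (t : ℕ) (ht : t ≤ p) (A : Finset (ZMod p)) :
    |((∑ h ∈ H, ∑ u ∈ range t, ∑ v ∈ range t,
        (if h + (u : ZMod p) - (v : ZMod p) ∈ A then (1:ℕ) else 0) : ℕ) : ℝ)
      - (H.card : ℝ) * t ^ 2 * A.card / p|
    ≤ ε' * H.card * t * A.card := by
  set D : ZMod p → ℂ := fun a => ∑ u ∈ range t, ep p (a * u) with hD
  set F : ZMod p → ℂ := fun a => (∑ h ∈ H, ep p (a * h)) * (∑ u ∈ range t, ep p (a * u))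
        * (∑ v ∈ range t, ep p (-(a * v))) * (∑ x ∈ A, ep p (-(a * x))) with hFdef
  set N : ℕ := ∑ h ∈ H, ∑ u ∈ range t, ∑ v ∈ range t,
        (if h + (u : ZMod p) - (v : ZMod p) ∈ A then (1:ℕ) else 0) with hN
  have hNc : ((N : ℕ) : ℂ) = ∑ h ∈ H, ∑ u ∈ range t, ∑ v ∈ range t,
      (if h + (u : ZMod p) - (v : ZMod p) ∈ A then (1:ℂ) else 0) := by
    rw [hN]
    push_cast
    rfl
  have hkey : (p : ℂ) * (N : ℂ) = ∑ a : ZMod p, F a := by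
    rw [hNc]; exact key_identity p H t A
  have hF0 : F 0 = (H.card : ℂ) * t * t * A.card := by
    simp [hFdef, zero_mul, neg_zero, ep_zero]
  have hsplit : (p : ℂ) * (N : ℂ) - (H.card : ℂ) * t * t * A.card
      = ∑ a ∈ Finset.univ.erase (0 : ZMod p), F a := by
    rw [hkey, ← Finset.add_sum_erase Finset.univ F (mem_univ (0 : ZMod p)), hF0]
    ring
  have hbound : ‖∑ a ∈ Finset.univ.erase (0 : ZMod p), F a‖
      ≤ ε' * H.card * A.card * ((p : ℝ) * t) := by
    calc ‖∑ a ∈ Finset.univ.erase (0 : ZMod p), F a‖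
        ≤ ∑ a ∈ Finset.univ.erase (0 : ZMod p), ‖F a‖ := norm_sum_le _ _
      _ ≤ ∑ a ∈ Finset.univ.erase (0 : ZMod p), ε' * H.card * A.card * ‖D a‖ ^ 2 := by
          refine Finset.sum_le_sum fun a ha => ?_
          have ha0 : a ≠ 0 := (Finset.mem_erase.mp ha).1
          have h1 : ‖F a‖ = ‖∑ h ∈ H, ep p (a * h)‖ * ‖D a‖ * ‖∑ v ∈ range t, ep p (-(a * v))‖
              * ‖∑ x ∈ A, ep p (-(a * x))‖ := by
            rw [hFdef]; simp [norm_mul, hD]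
          have h2 : ‖∑ v ∈ range t, ep p (-(a * v))‖ = ‖D a‖ := by
            rw [conj_D p t a, RCLike.norm_conj, hD]
          have h3 : ‖∑ x ∈ A, ep p (-(a * x))‖ ≤ (A.card : ℝ) := by
            calc ‖∑ x ∈ A, ep p (-(a * x))‖ ≤ ∑ x ∈ A, ‖ep p (-(a * x))‖ := norm_sum_le _ _
              _ = A.card := by
                  rw [Finset.sum_congr rfl fun x _ => norm_ep p (-(a * x))]
                  simp
          rw [h1, h2]
          have h4 := hF a ha0
          calc ‖∑ h ∈ H, ep p (a * h)‖ * ‖D a‖ * ‖D a‖ * ‖∑ x ∈ A, ep p (-(a * x))‖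
              ≤ (ε' * H.card) * ‖D a‖ * ‖D a‖ * (A.card : ℝ) := by
                gcongr <;> positivity
            _ = ε' * H.card * A.card * ‖D a‖ ^ 2 := by ring
      _ ≤ ∑ a : ZMod p, ε' * H.card * A.card * ‖D a‖ ^ 2 := by
          refine Finset.sum_le_sum_of_subset_of_nonneg (Finset.subset_univ _) ?_
          intro a _ _
          positivity
      _ = ε' * H.card * A.card * ((p : ℝ) * t) := by
          rw [← Finset.mul_sum, parsevalD_norm p t ht]
  have hreal : ((p : ℂ) * (N : ℂ) - (H.card : ℂ) * t * t * A.card)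
      = ((((p : ℝ) * N - (H.card : ℝ) * t ^ 2 * A.card : ℝ)) : ℂ) := by
    push_cast
    ring
  have habs : |(p : ℝ) * N - (H.card : ℝ) * t ^ 2 * A.card|
      ≤ ε' * H.card * A.card * ((p : ℝ) * t) := by
    have := hbound
    rw [← hsplit, hreal, Complex.norm_real, Real.norm_eq_abs] at this
    exact this
  have hp0 : (0 : ℝ) < p := by exact_mod_cast hp.out.pos
  have hrw : ((N : ℕ) : ℝ) - (H.card : ℝ) * t ^ 2 * A.card / p
      = ((p : ℝ) * N - (H.card : ℝ) * t ^ 2 * A.card) / p := by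
    field_simp
  rw [hrw, abs_div, abs_of_pos hp0, div_le_iff₀ hp0]
  calc |(p : ℝ) * N - (H.card : ℝ) * t ^ 2 * A.card|
      ≤ ε' * H.card * A.card * ((p : ℝ) * t) := habs
    _ = ε' * H.card * t * A.card * p := by ring



def Io (p L : ℕ) (s : ZMod p) : Finset (ZMod p) := (range L).image (fun n : ℕ => (n : ZMod p) + s)

variable (p : ℕ) [NeZero p]

lemma natCast_val_eq' (x : ZMod p) : ((x.val : ℕ) : ZMod p) = x := by
  simp [ZMod.natCast_val, ZMod.cast_id]

lemma mem_Io {L : ℕ} (hL : L ≤ p) {s x : ZMod p} : x ∈ Io p L s ↔ (x - s).val < L := by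
  constructor
  · rintro hx
    obtain ⟨n, hn, rfl⟩ := Finset.mem_image.mp hx
    rw [add_sub_cancel_right, ZMod.val_natCast_of_lt (lt_of_lt_of_le (mem_range.mp hn) hL)]
    exact mem_range.mp hn
  · intro h
    refine Finset.mem_image.mpr ⟨(x - s).val, mem_range.mpr h, ?_⟩
    rw [natCast_val_eq', sub_add_cancel]

lemma card_Io {L : ℕ} (hL : L ≤ p) (s : ZMod p) : (Io p L s).card = L := by
  rw [Io, Finset.card_image_of_injOn, card_range]
  intro n hn m hm h
  have h2 : ((n : ZMod p)) = m := by
    have := add_right_cancel h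
    exact this
  have := congrArg ZMod.val h2
  rwa [ZMod.val_natCast_of_lt (lt_of_lt_of_le (mem_range.mp hn) hL),
    ZMod.val_natCast_of_lt (lt_of_lt_of_le (mem_range.mp hm) hL)] at this

lemma val_add_nat (x : ZMod p) (k : ℕ) (h : x.val + k < p) :
    (x + (k : ZMod p)).val = x.val + k := by
  have hk : k < p := by omega
  rw [ZMod.val_add, ZMod.val_natCast_of_lt hk, Nat.mod_eq_of_lt h]

lemma mem_Io_compl {L : ℕ} (hL : L ≤ p) (s x : ZMod p) :
    x ∈ Io p (p - L) (s + (L : ZMod p)) ↔ x ∉ Io p L s := by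
  rw [mem_Io p (by omega : p - L ≤ p), mem_Io p hL, not_lt]
  have hw : x - (s + (L : ZMod p)) = (x - s) + ((p - L : ℕ) : ZMod p) := by
    have hcast : ((L : ℕ) : ZMod p) + ((p - L : ℕ) : ZMod p) = 0 := by
      rw [← Nat.cast_add, show L + (p - L) = p by omega, ZMod.natCast_self]
    linear_combination -hcast
  rw [hw]
  set w := x - s with hwdef
  have hwval : w.val < p := ZMod.val_lt w
  rcases Nat.eq_zero_or_pos L with hL0 | hL0
  · subst hL0
    simp only [Nat.sub_zero, ZMod.natCast_self, add_zero]
    omega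
  · have hpL : p - L < p := by omega
    rw [ZMod.val_add, ZMod.val_natCast_of_lt hpL]
    constructor
    · intro h
      by_contra hc
      push_neg at hc
      have : w.val + (p - L) < p := by omega
      rw [Nat.mod_eq_of_lt this] at h
      omega
    · intro h
      have heq : w.val + (p - L) = (w.val - L) + p := by omega
      rw [heq, Nat.add_mod_right, Nat.mod_eq_of_lt (by omega)]
      omega

lemma card_split (H : Finset (ZMod p)) {L : ℕ} (hL : L ≤ p) (s : ZMod p) :
    (H ∩ Io p L s).card + (H ∩ Io p (p - L) (s + (L : ZMod p))).card = H.card := by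
  have h1 : H ∩ Io p (p - L) (s + (L : ZMod p)) = H \ Io p L s := by
    ext x
    rw [Finset.mem_inter, Finset.mem_sdiff, mem_Io_compl p hL s x]
  rw [h1]
  exact Finset.card_inter_add_card_sdiff H (Io p L s)

lemma upper_sandwich (H : Finset (ZMod p)) (t L : ℕ) (s : ZMod p) (ht : 1 ≤ t)
    (hLt : L + 2 * (t - 1) ≤ p) :
    (H ∩ Io p L s).card * t ^ 2
      ≤ ∑ h ∈ H, ∑ u ∈ range t, ∑ v ∈ range t,
          (if h + (u : ZMod p) - (v : ZMod p) ∈ Io p (L + 2 * (t - 1)) (s - ((t - 1 : ℕ) : ZMod p))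
            then (1:ℕ) else 0) := by
  have hkey : ∀ h ∈ Io p L s, ∀ u ∈ range t, ∀ v ∈ range t,
      h + (u : ZMod p) - (v : ZMod p) ∈ Io p (L + 2 * (t - 1)) (s - ((t - 1 : ℕ) : ZMod p)) := by
    intro h hh u hu v hv
    rw [mem_Io p (by omega)] at hh
    rw [mem_Io p hLt]
    have hu' : u ≤ t - 1 := by have := mem_range.mp hu; omega
    have hv' : v ≤ t - 1 := by have := mem_range.mp hv; omega
    set k : ℕ := u + (t - 1) - v with hk
    have hkk : k ≤ 2 * (t - 1) := by omega
    have hnat : u + (t - 1) = k + v := by omega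
    have hcast : (u : ZMod p) + ((t - 1 : ℕ) : ZMod p) = (k : ZMod p) + (v : ZMod p) := by
      exact_mod_cast congrArg (fun n : ℕ => (n : ZMod p)) hnat
    have heq : h + (u : ZMod p) - (v : ZMod p) - (s - ((t - 1 : ℕ) : ZMod p))
        = (h - s) + (k : ZMod p) := by
      linear_combination hcast
    rw [heq, val_add_nat p _ _ (by omega)]
    omega
  calc (H ∩ Io p L s).card * t ^ 2
      = ∑ h ∈ H ∩ Io p L s, ∑ u ∈ range t, ∑ v ∈ range t, 1 := by
        simp only [Finset.sum_const, card_range, smul_eq_mul, mul_one]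
        ring
    _ = ∑ h ∈ H ∩ Io p L s, ∑ u ∈ range t, ∑ v ∈ range t,
          (if h + (u : ZMod p) - (v : ZMod p) ∈ Io p (L + 2 * (t - 1)) (s - ((t - 1 : ℕ) : ZMod p))
            then (1:ℕ) else 0) := by
        refine Finset.sum_congr rfl fun h hh => ?_
        refine Finset.sum_congr rfl fun u hu => ?_
        refine Finset.sum_congr rfl fun v hv => ?_
        rw [if_pos (hkey h (Finset.mem_inter.mp hh).2 u hu v hv)]
    _ ≤ _ := Finset.sum_le_sum_of_subset (Finset.inter_subset_left)

lemma lower_sandwich (H : Finset (ZMod p)) (t L : ℕ) (s : ZMod p) (ht : 1 ≤ t)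
    (h2t : 2 * (t - 1) ≤ L) (hLp : L ≤ p) :
    ∑ h ∈ H, ∑ u ∈ range t, ∑ v ∈ range t,
        (if h + (u : ZMod p) - (v : ZMod p) ∈ Io p (L - 2 * (t - 1)) (s + ((t - 1 : ℕ) : ZMod p))
          then (1:ℕ) else 0)
      ≤ (H ∩ Io p L s).card * t ^ 2 := by
  have hkey : ∀ h : ZMod p, ∀ u ∈ range t, ∀ v ∈ range t,
      h + (u : ZMod p) - (v : ZMod p) ∈ Io p (L - 2 * (t - 1)) (s + ((t - 1 : ℕ) : ZMod p))
      → h ∈ Io p L s := by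
    intro h u hu v hv hmem
    rw [mem_Io p (by omega)] at hmem
    rw [mem_Io p hLp]
    have hu' : u ≤ t - 1 := by have := mem_range.mp hu; omega
    have hv' : v ≤ t - 1 := by have := mem_range.mp hv; omega
    set k : ℕ := (t - 1) + v - u with hk
    have hkk : k ≤ 2 * (t - 1) := by omega
    have hnat : (t - 1) + v = k + u := by omega
    have hcast : ((t - 1 : ℕ) : ZMod p) + (v : ZMod p) = (k : ZMod p) + (u : ZMod p) := by
      exact_mod_cast congrArg (fun n : ℕ => (n : ZMod p)) hnat
    have heq : h - s = (h + (u : ZMod p) - (v : ZMod p) - (s + ((t - 1 : ℕ) : ZMod p)))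
        + (k : ZMod p) := by
      linear_combination hcast
    rw [heq, val_add_nat p _ _ (by omega)]
    omega
  calc ∑ h ∈ H, ∑ u ∈ range t, ∑ v ∈ range t,
        (if h + (u : ZMod p) - (v : ZMod p) ∈ Io p (L - 2 * (t - 1)) (s + ((t - 1 : ℕ) : ZMod p))
          then (1:ℕ) else 0)
      ≤ ∑ h ∈ H, (if h ∈ Io p L s then t ^ 2 else 0) := by
        refine Finset.sum_le_sum fun h hh => ?_
        by_cases hmem : h ∈ Io p L s
        · rw [if_pos hmem]
          calc ∑ u ∈ range t, ∑ v ∈ range t,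
              (if h + (u : ZMod p) - (v : ZMod p) ∈ Io p (L - 2 * (t - 1)) (s + ((t - 1 : ℕ) : ZMod p))
                then (1:ℕ) else 0)
              ≤ ∑ u ∈ range t, ∑ v ∈ range t, 1 := by
                refine Finset.sum_le_sum fun u hu => Finset.sum_le_sum fun v hv => ?_
                split <;> omega
            _ = t ^ 2 := by
                simp only [Finset.sum_const, card_range, smul_eq_mul, mul_one]
                ring
        · rw [if_neg hmem]
          have : ∀ u ∈ range t, ∀ v ∈ range t,
              (if h + (u : ZMod p) - (v : ZMod p) ∈ Io p (L - 2 * (t - 1)) (s + ((t - 1 : ℕ) : ZMod p))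
                then (1:ℕ) else 0) = 0 := by
            intro u hu v hv
            rw [if_neg]
            intro hc
            exact hmem (hkey h u hu v hv hc)
          rw [Finset.sum_congr rfl fun u hu => Finset.sum_congr rfl fun v hv => this u hu v hv]
          simp
    _ = (H ∩ Io p L s).card * t ^ 2 := by
        rw [Finset.sum_ite_mem, Finset.sum_const, smul_eq_mul]



section Est

lemma lower_est (p : ℕ) [hp : Fact p.Prime] (H : Finset (ZMod p)) (ε' : ℝ) (hε' : 0 < ε')
    (hF : ∀ a : ZMod p, a ≠ 0 → ‖∑ h ∈ H, ep p (a * h)‖ ≤ ε' * H.card)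
    (t : ℕ) (ht1 : 1 ≤ t) (htp : t ≤ p) : ∀ L ≤ p, ∀ s : ZMod p,
    (H.card : ℝ) * L / p - (H.card : ℝ) * ((2 * (t - 1) : ℕ) : ℝ) / p - ε' * H.card * p / t
      ≤ ((H ∩ Io p L s).card : ℝ) := by
  intro L hL s
  have hp0 : (0:ℝ) < p := by exact_mod_cast hp.out.pos
  have ht0 : (0:ℝ) < t := by exact_mod_cast ht1
  have hm0 : (0:ℝ) ≤ H.card := Nat.cast_nonneg _
  have hε'H : (0:ℝ) ≤ ε' * H.card := by positivity
  by_cases h2t : 2 * (t - 1) ≤ L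
  · set L₂ := L - 2 * (t - 1) with hL₂def
    have hL₂ : L₂ ≤ p := by omega
    have hcast : (L₂ : ℝ) = (L : ℝ) - ((2 * (t - 1) : ℕ) : ℝ) := by
      rw [hL₂def]
      push_cast [h2t]
      ring
    have hsand := lower_sandwich p H t L s ht1 h2t hL
    have hcb := count_bound p H ε' hF hε'H t htp (Io p L₂ (s + ((t - 1 : ℕ) : ZMod p)))
    rw [card_Io p hL₂] at hcb
    have h1 : ((H ∩ Io p L s).card : ℝ) * t ^ 2
        ≥ (H.card : ℝ) * t ^ 2 * L₂ / p - ε' * H.card * t * L₂ := by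
      have hs' : ((∑ h ∈ H, ∑ u ∈ range t, ∑ v ∈ range t,
          (if h + (u : ZMod p) - (v : ZMod p) ∈ Io p L₂ (s + ((t - 1 : ℕ) : ZMod p))
            then (1:ℕ) else 0) : ℕ) : ℝ) ≤ ((H ∩ Io p L s).card : ℝ) * t ^ 2 := by
        exact_mod_cast hsand
      have := (abs_le.mp hcb).1
      linarith
    have h2 : (H.card : ℝ) * L₂ / p - ε' * H.card * L₂ / t
        ≤ ((H ∩ Io p L s).card : ℝ) := by
      rw [← mul_le_mul_iff_of_pos_right (by positivity : (0:ℝ) < (t:ℝ) ^ 2)]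
      calc ((H.card : ℝ) * L₂ / p - ε' * H.card * L₂ / t) * t ^ 2
          = (H.card : ℝ) * t ^ 2 * L₂ / p - ε' * H.card * t * L₂ := by
            field_simp
            try ring
        _ ≤ ((H ∩ Io p L s).card : ℝ) * t ^ 2 := h1
    have h3 : ε' * H.card * L₂ / t ≤ ε' * H.card * p / t := by
      gcongr
    rw [hcast] at h2 h3
    have heq2 : (H.card : ℝ) * ((L:ℝ) - ((2 * (t - 1) : ℕ) : ℝ)) / p
        = (H.card : ℝ) * L / p - (H.card : ℝ) * ((2 * (t - 1) : ℕ) : ℝ) / p := by ring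
    rw [heq2] at h2
    linarith
  · push_neg at h2t
    have hLle : (L : ℝ) ≤ ((2 * (t - 1) : ℕ) : ℝ) := by exact_mod_cast h2t.le
    have h1 : (H.card : ℝ) * L / p ≤ (H.card : ℝ) * ((2 * (t - 1) : ℕ) : ℝ) / p := by gcongr
    have h2 : (0:ℝ) ≤ ε' * H.card * p / t := by positivity
    have h3 : (0:ℝ) ≤ ((H ∩ Io p L s).card : ℝ) := Nat.cast_nonneg _
    linarith

lemma upper_est (p : ℕ) [hp : Fact p.Prime] (H : Finset (ZMod p)) (ε' : ℝ) (hε' : 0 < ε')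
    (hF : ∀ a : ZMod p, a ≠ 0 → ‖∑ h ∈ H, ep p (a * h)‖ ≤ ε' * H.card)
    (t : ℕ) (ht1 : 1 ≤ t) (htp : t ≤ p) : ∀ L ≤ p, ∀ s : ZMod p,
    ((H ∩ Io p L s).card : ℝ)
      ≤ (H.card : ℝ) * L / p + (H.card : ℝ) * ((2 * (t - 1) : ℕ) : ℝ) / p + ε' * H.card * p / t := by
  intro L hL s
  have hp0 : (0:ℝ) < p := by exact_mod_cast hp.out.pos
  have ht0 : (0:ℝ) < t := by exact_mod_cast ht1
  have hm0 : (0:ℝ) ≤ H.card := Nat.cast_nonneg _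
  have hε'H : (0:ℝ) ≤ ε' * H.card := by positivity
  by_cases hup : L + 2 * (t - 1) ≤ p
  · set L₁ := L + 2 * (t - 1) with hL₁def
    have hcast : (L₁ : ℝ) = (L : ℝ) + ((2 * (t - 1) : ℕ) : ℝ) := by
      rw [hL₁def]; push_cast; ring
    have hsand := upper_sandwich p H t L s ht1 hup
    have hcb := count_bound p H ε' hF hε'H t htp (Io p L₁ (s - ((t - 1 : ℕ) : ZMod p)))
    rw [card_Io p hup] at hcb
    have h1 : ((H ∩ Io p L s).card : ℝ) * t ^ 2
        ≤ (H.card : ℝ) * t ^ 2 * L₁ / p + ε' * H.card * t * L₁ := by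
      have hs' : ((H ∩ Io p L s).card : ℝ) * t ^ 2
          ≤ ((∑ h ∈ H, ∑ u ∈ range t, ∑ v ∈ range t,
            (if h + (u : ZMod p) - (v : ZMod p) ∈ Io p L₁ (s - ((t - 1 : ℕ) : ZMod p))
              then (1:ℕ) else 0) : ℕ) : ℝ) := by
        exact_mod_cast hsand
      have := (abs_le.mp hcb).2
      linarith
    have h2 : ((H ∩ Io p L s).card : ℝ)
        ≤ (H.card : ℝ) * L₁ / p + ε' * H.card * L₁ / t := by
      rw [← mul_le_mul_iff_of_pos_right (by positivity : (0:ℝ) < (t:ℝ) ^ 2)]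
      calc ((H ∩ Io p L s).card : ℝ) * t ^ 2
          ≤ (H.card : ℝ) * t ^ 2 * L₁ / p + ε' * H.card * t * L₁ := h1
        _ = ((H.card : ℝ) * L₁ / p + ε' * H.card * L₁ / t) * t ^ 2 := by
            field_simp
            try ring
    have h3 : ε' * H.card * L₁ / t ≤ ε' * H.card * p / t := by
      gcongr
    rw [hcast] at h2 h3
    have heq : (H.card : ℝ) * ((L:ℝ) + ((2 * (t - 1) : ℕ) : ℝ)) / p
        = (H.card : ℝ) * L / p + (H.card : ℝ) * ((2 * (t - 1) : ℕ) : ℝ) / p := by ring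
    rw [heq] at h2
    linarith
  · -- complement trick
    have hsplit := card_split p H hL s
    have hlow := lower_est p H ε' hε' hF t ht1 htp (p - L) (by omega) (s + (L : ZMod p))
    have hcastpL : ((p - L : ℕ) : ℝ) = (p : ℝ) - (L : ℝ) := by
      push_cast [hL]
      ring
    have hm : ((H ∩ Io p L s).card : ℝ)
        = (H.card : ℝ) - ((H ∩ Io p (p - L) (s + (L : ZMod p))).card : ℝ) := by
      have := hsplit
      push_cast [← this]
      ring
    rw [hm]
    rw [hcastpL] at hlow
    have hId : (H.card : ℝ) - ((H.card : ℝ) * ((p:ℝ) - (L:ℝ)) / p) = (H.card : ℝ) * L / p := by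
      field_simp
      ring
    have hmono : (H.card : ℝ) - ((H ∩ Io p (p - L) (s + (L : ZMod p))).card : ℝ)
        ≤ (H.card : ℝ) - ((H.card : ℝ) * ((p:ℝ) - (L:ℝ)) / p
            - (H.card : ℝ) * ((2 * (t - 1) : ℕ) : ℝ) / p - ε' * H.card * p / t) := by
      linarith
    calc (H.card : ℝ) - ((H ∩ Io p (p - L) (s + (L : ZMod p))).card : ℝ)
        ≤ (H.card : ℝ) - ((H.card : ℝ) * ((p:ℝ) - (L:ℝ)) / p)
            + (H.card : ℝ) * ((2 * (t - 1) : ℕ) : ℝ) / p + ε' * H.card * p / t := by linarith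
      _ = (H.card : ℝ) * L / p + (H.card : ℝ) * ((2 * (t - 1) : ℕ) : ℝ) / p
            + ε' * H.card * p / t := by rw [hId]

end Est

lemma core_est (p : ℕ) [hp : Fact p.Prime] (H : Finset (ZMod p)) (hH : H.Nonempty)
    (ε' : ℝ) (hε' : 0 < ε') (hε'2 : ε' ≤ 1/2)
    (hF : ∀ a : ZMod p, a ≠ 0 → ‖∑ h ∈ H, ep p (a * h)‖ ≤ ε' * H.card) :
    ∀ L ≤ p, ∀ s : ZMod p,
      |((H ∩ Io p L s).card : ℝ) / H.card - (L : ℝ) / p| ≤ 3 * Real.sqrt ε' := by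
  intro L hL s
  have hp0 : (0:ℝ) < p := by exact_mod_cast hp.out.pos
  have hm1 : 1 ≤ H.card := Finset.card_pos.mpr hH
  have hm0 : (0:ℝ) < H.card := by exact_mod_cast hm1
  have hsq0 : (0:ℝ) < Real.sqrt ε' := Real.sqrt_pos.mpr hε'
  have hsqp : (0:ℝ) < Real.sqrt ε' * p := by positivity
  set t : ℕ := ⌈Real.sqrt ε' * p⌉₊ with htdef
  have ht1 : 1 ≤ t := by
    rw [htdef]
    exact Nat.one_le_ceil_iff.mpr hsqp
  have htp : t ≤ p := by
    rw [htdef, Nat.ceil_le]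
    calc Real.sqrt ε' * p ≤ 1 * p := by
          gcongr
          exact Real.sqrt_le_one.mpr (by linarith)
      _ = (p : ℝ) := by ring
  have htlow : Real.sqrt ε' * p ≤ (t : ℝ) := Nat.le_ceil _
  have ht0 : (0:ℝ) < t := lt_of_lt_of_le hsqp htlow
  have hthigh : ((2 * (t - 1) : ℕ) : ℝ) ≤ 2 * (Real.sqrt ε' * p) := by
    have h1 : (t : ℝ) < Real.sqrt ε' * p + 1 := Nat.ceil_lt_add_one (le_of_lt hsqp)
    have h2 : ((2 * (t - 1) : ℕ) : ℝ) = 2 * ((t:ℝ) - 1) := by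
      push_cast [ht1]
      ring
    rw [h2]
    linarith
  -- the two error terms
  have hA : ((2 * (t - 1) : ℕ) : ℝ) / p ≤ 2 * Real.sqrt ε' := by
    rw [div_le_iff₀ hp0]
    calc ((2 * (t - 1) : ℕ) : ℝ) ≤ 2 * (Real.sqrt ε' * p) := hthigh
      _ = 2 * Real.sqrt ε' * p := by ring
  have hB : ε' * p / t ≤ Real.sqrt ε' := by
    have h1 : ε' * p / t ≤ ε' * p / (Real.sqrt ε' * p) := by
      exact div_le_div_of_nonneg_left (by positivity) hsqp htlow
    have h2 : ε' * (p:ℝ) / (Real.sqrt ε' * p) = Real.sqrt ε' := by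
      have hss : Real.sqrt ε' * Real.sqrt ε' = ε' := Real.mul_self_sqrt hε'.le
      rw [show ε' * (p:ℝ) = Real.sqrt ε' * (Real.sqrt ε' * p) by linear_combination (-(p:ℝ)) * hss]
      exact mul_div_cancel_right₀ _ (ne_of_gt hsqp)
    linarith
  have hup := upper_est p H ε' hε' hF t ht1 htp L hL s
  have hlo := lower_est p H ε' hε' hF t ht1 htp L hL s
  have hrw : ((H ∩ Io p L s).card : ℝ) / H.card - (L : ℝ) / p
      = (((H ∩ Io p L s).card : ℝ) - (H.card : ℝ) * L / p) / H.card := by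
    field_simp
  have key : |((H ∩ Io p L s).card : ℝ) / H.card - (L : ℝ) / p|
      ≤ ((2 * (t - 1) : ℕ) : ℝ) / p + ε' * p / t := by
    rw [hrw, abs_div, abs_of_pos hm0, div_le_iff₀ hm0]
    have habs : |((H ∩ Io p L s).card : ℝ) - (H.card : ℝ) * L / p|
        ≤ (H.card : ℝ) * ((2 * (t - 1) : ℕ) : ℝ) / p + ε' * H.card * p / t := by
      rw [abs_le]
      constructor <;> linarith
    calc |((H ∩ Io p L s).card : ℝ) - (H.card : ℝ) * L / p|
        ≤ (H.card : ℝ) * ((2 * (t - 1) : ℕ) : ℝ) / p + ε' * H.card * p / t := habs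
      _ = (((2 * (t - 1) : ℕ) : ℝ) / p + ε' * p / t) * H.card := by ring
  linarith

end WeylAux

open WeylAux in
theorem weyl_criterion_equidistribution (ε : ℝ) (hε : 0 < ε) :
    ∃ ε' : ℝ, 0 < ε' ∧ ∀ p : ℕ, p.Prime →
      ∀ H : Finset (ZMod p), H.Nonempty →
        (∀ a : ℤ, ¬ ((p : ℤ) ∣ a) →
          ‖∑ h ∈ H, ep p ((a : ZMod p) * h)‖ < ε' * H.card) →
        ∀ J : Finset (ZMod p), IsInterval p J →
          |((H ∩ J).card : ℝ) / H.card - (J.card : ℝ) / p| < ε := by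
  refine ⟨min ((ε/4)^2) (1/2), lt_min (by positivity) (by norm_num), ?_⟩
  set ε' : ℝ := min ((ε/4)^2) (1/2) with hε'def
  have hε'pos : 0 < ε' := lt_min (by positivity) (by norm_num)
  have hε'half : ε' ≤ 1/2 := min_le_right _ _
  have hsqrt : Real.sqrt ε' ≤ ε/4 := by
    calc Real.sqrt ε' ≤ Real.sqrt ((ε/4)^2) := Real.sqrt_le_sqrt (min_le_left _ _)
      _ = ε/4 := Real.sqrt_sq (by positivity)
  intro p hpp H hH hyp J hJint
  haveI : Fact p.Prime := ⟨hpp⟩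
  -- transfer the hypothesis to ZMod-indexed frequencies
  have hF : ∀ α : ZMod p, α ≠ 0 → ‖∑ h ∈ H, ep p (α * h)‖ ≤ ε' * H.card := by
    intro α hα
    have hv : ¬ ((p : ℤ) ∣ ((α.val : ℕ) : ℤ)) := by
      rw [Int.natCast_dvd_natCast]
      intro hdvd
      exact hα ((ZMod.val_eq_zero α).mp (Nat.eq_zero_of_dvd_of_lt hdvd (ZMod.val_lt α)))
    have h := le_of_lt (hyp ((α.val : ℕ) : ℤ) hv)
    rwa [show ((((α.val : ℕ) : ℤ) : ZMod p)) = α by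
      rw [Int.cast_natCast, natCast_val_eq']] at h
  obtain ⟨a, b, ha, hJ⟩ := hJint
  set L : ℕ := J.card with hLdef
  have hLp : L ≤ p := by
    have h := Finset.card_le_univ J
    rw [ZMod.card] at h
    exact h
  set φ : ZMod p → ZMod p := fun y => a⁻¹ * (y - b) with hφdef
  have hφ : Function.Injective φ := by
    intro x y hxy
    have h1 : x - b = y - b := mul_left_cancel₀ (inv_ne_zero ha) hxy
    exact sub_left_injective h1
  set H' : Finset (ZMod p) := H.image φ with hH'def
  have hH' : H'.Nonempty := hH.image φ
  have hcard' : H'.card = H.card := Finset.card_image_of_injective H hφ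
  have hF' : ∀ α : ZMod p, α ≠ 0 → ‖∑ h' ∈ H', ep p (α * h')‖ ≤ ε' * H'.card := by
    intro α hα
    rw [hH'def, Finset.sum_image (fun x _ y _ h => hφ h), hcard']
    set β : ZMod p := α * a⁻¹ with hβdef
    have hβ : β ≠ 0 := mul_ne_zero hα (inv_ne_zero ha)
    have hterm : ∀ h ∈ H, ep p (α * φ h) = ep p (β * h) * ep p (-(β * b)) := by
      intro h _
      rw [← ep_add]
      congr 1
      rw [hφdef, hβdef]
      ring
    rw [Finset.sum_congr rfl hterm, ← Finset.sum_mul, norm_mul, norm_ep, mul_one]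
    exact hF β hβ
  have hIo : ((range L).image (fun n : ℕ => a * (n : ZMod p) + b)).image φ = Io p L 0 := by
    rw [Finset.image_image, Io]
    have hfun : φ ∘ (fun n : ℕ => a * (n : ZMod p) + b) = fun n : ℕ => (n : ZMod p) + 0 := by
      funext n
      simp only [Function.comp_apply, hφdef]
      rw [add_sub_cancel_right, ← mul_assoc, inv_mul_cancel₀ ha, one_mul, add_zero]
    rw [hfun]
  have hcardJ : (H ∩ J).card = (H' ∩ Io p L 0).card := by
    have h1 : (H ∩ J).image φ = H' ∩ Io p L 0 := by
      rw [Finset.image_inter _ _ hφ, ← hIo, ← hJ, hH'def]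
    rw [← h1, Finset.card_image_of_injective _ hφ]
  have hcore := core_est p H' hH' ε' hε'pos hε'half hF' L hLp 0
  rw [← hcardJ, hcard'] at hcore
  calc |((H ∩ J).card : ℝ) / H.card - (J.card : ℝ) / p|
      ≤ 3 * Real.sqrt ε' := hcore
    _ ≤ 3 * (ε/4) := by linarith
    _ < ε := by linarith
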